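/- Let d ≥ 1 and let (ν_ε)_{ε>0} be a family of admissible measures on ℝ^d. For each ε > 0 let R_ε ∈ [1,∞] (with R_ε = ∞ allowed, in which case min(1, R_ε|x|) = 1 for x ≠ 0), set C_ε = ∫_{ℝ^d} min(1, R_ε|x|) ν_ε(dx), assume 0 < C_ε < ∞, and let λ_ε(dx) = C_ε^{−1} min(1, R_ε|x|) ν_ε(dx), a probability measure. Assume that for every R > 0, λ_ε({x : |x| > R}) → 1 as ε → 0⁺. Let E ⊂ ℝ^d be a Borel set of finite Lebesgue measure whose covariance function g_E is Lipschitz continuous (this holds whenever E also has finite classical perimeter). Then lim_{ε→0⁺} C_ε^{−1} Per_{ν_ε}(E) = |E|. -/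

import Mathlib

open MeasureTheory Filter Topology ENNReal NNReal

/-- The non-local `ν`-perimeter: `Per_ν(E) = ∫_E ν(Eᶜ − x) dx`. -/
noncomputable def nuPer {d : ℕ} (ν : Measure (EuclideanSpace ℝ (Fin d)))
    (E : Set (EuclideanSpace ℝ (Fin d))) : ℝ≥0∞ :=
  ∫⁻ x in E, ν {y | x + y ∈ Eᶜ}

/-- The covariance function `g_E(y) = |E ∩ (E + y)|` of a set `E`. -/
noncomputable def covFn {d : ℕ} (E : Set (EuclideanSpace ℝ (Fin d)))
    (y : EuclideanSpace ℝ (Fin d)) : ℝ≥0∞ :=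
  volume (E ∩ {x | x - y ∈ E})

section Aux

variable {d : ℕ}

local notation "V" => EuclideanSpace ℝ (Fin d)

lemma covFn_zero (E : Set V) : covFn E 0 = volume E := by
  have h : {x : V | x - 0 ∈ E} = E := by ext x; simp
  rw [covFn, h, Set.inter_self]

lemma covFn_le (E : Set V) (y : V) : covFn E y ≤ volume E :=
  measure_mono Set.inter_subset_left

lemma covFn_eq_add (E : Set V) (y : V) :
    covFn E (-y) = volume (E ∩ {x | x + y ∈ E}) := by
  simp [covFn, sub_neg_eq_add]

lemma covFn_tail (E : Set V) {r : ℝ} (hr : 0 ≤ r)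
    {z : V} (hz : 2 * r < ‖z‖) :
    covFn E z ≤ 2 * volume (E \ Metric.closedBall 0 r) := by
  set B := Metric.closedBall (0 : V) r with hB
  have hsub : E ∩ {x | x - z ∈ E} ⊆ (E \ B) ∪ ((· - z) ⁻¹' (E \ B)) := by
    rintro x ⟨hx, hxz⟩
    by_cases hxB : x ∈ B
    · right
      refine ⟨hxz, fun hB2 => absurd hz (not_lt.2 ?_)⟩
      have h1 : ‖x‖ ≤ r := by simpa [hB, dist_zero_right] using hxB
      have h2 : ‖x - z‖ ≤ r := by simpa [hB, dist_zero_right] using hB2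
      have hxz2 : x - (x - z) = z := sub_sub_cancel x z
      calc ‖z‖ = ‖x - (x - z)‖ := by rw [hxz2]
        _ ≤ ‖x‖ + ‖x - z‖ := norm_sub_le _ _
        _ ≤ 2 * r := by linarith
    · exact Or.inl ⟨hx, hxB⟩
  have hpre : volume ((· - z) ⁻¹' (E \ B)) = volume (E \ B) := by
    have h : ((· - z) : V → V) = (· + (-z)) := funext fun x => sub_eq_add_neg x z
    rw [h, measure_preimage_add_right]
  calc covFn E z ≤ volume ((E \ B) ∪ ((· - z) ⁻¹' (E \ B))) := measure_mono hsub
    _ ≤ volume (E \ B) + volume ((· - z) ⁻¹' (E \ B)) := measure_union_le _ _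
    _ = 2 * volume (E \ B) := by rw [hpre, two_mul]

lemma tail_vanish (E : Set V) (hE : MeasurableSet E) (hEvol : volume E < ⊤) :
    Tendsto (fun n : ℕ => volume (E \ Metric.closedBall (0 : V) n)) atTop (𝓝 0) := by
  have hinter : (⋂ n : ℕ, E \ Metric.closedBall (0 : V) n) = ∅ := by
    ext x
    simp only [Set.mem_iInter, Set.mem_diff, Metric.mem_closedBall, dist_zero_right,
      Set.mem_empty_iff_false, iff_false, not_forall]
    obtain ⟨n, hn⟩ := exists_nat_ge ‖x‖
    exact ⟨n, fun h => h.2 hn⟩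
  have h := tendsto_measure_iInter_atTop (μ := (volume : Measure V))
    (s := fun n : ℕ => E \ Metric.closedBall (0 : V) n)
    (fun n => (hE.diff measurableSet_closedBall).nullMeasurableSet)
    (fun m n hmn => Set.diff_subset_diff_right
      (Metric.closedBall_subset_closedBall (by exact_mod_cast hmn)))
    ⟨0, ((measure_mono Set.diff_subset).trans_lt hEvol).ne⟩
  rw [hinter] at h
  simpa [Function.comp_def] using h

lemma sigmaFinite_of_adm (ν : Measure V) (hν0 : ν {0} = 0)
    (hadm : (∫⁻ x, ENNReal.ofReal (min 1 ‖x‖) ∂ν) < ⊤) : SigmaFinite ν := by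
  have hmeas : Measurable fun x : V => ENNReal.ofReal (min 1 ‖x‖) :=
    ENNReal.measurable_ofReal.comp (measurable_const.min measurable_norm)
  have key : ∀ c : ℝ, 0 < c → c ≤ 1 → ν {x : V | c < ‖x‖} < ⊤ := by
    intro c hc hc1
    have hsub : {x : V | c < ‖x‖} ⊆ {x : V | ENNReal.ofReal c ≤ ENNReal.ofReal (min 1 ‖x‖)} := by
      intro x hx
      exact ENNReal.ofReal_le_ofReal (le_min hc1 (le_of_lt hx))
    refine (measure_mono hsub).trans_lt ?_
    refine (meas_ge_le_lintegral_div hmeas.aemeasurable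
      (ENNReal.ofReal_pos.2 hc).ne' ENNReal.ofReal_ne_top).trans_lt ?_
    exact ENNReal.div_lt_top hadm.ne (ENNReal.ofReal_pos.2 hc).ne'
  constructor
  refine ⟨⟨fun n => {(0 : V)} ∪ {x : V | (1 : ℝ) / (n + 1) < ‖x‖},
    fun _ => trivial, fun n => ?_, ?_⟩⟩
  · refine (measure_union_le _ _).trans_lt ?_
    rw [hν0, zero_add]
    exact key _ (by positivity) (by
      rw [div_le_one (by positivity)]; linarith [Nat.cast_nonneg (α := ℝ) n])
  · ext x
    simp only [Set.mem_iUnion, Set.mem_union, Set.mem_singleton_iff, Set.mem_setOf_eq,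
      Set.mem_univ, iff_true]
    by_cases hx : x = 0
    · exact ⟨0, Or.inl hx⟩
    · obtain ⟨n, hn⟩ := exists_nat_one_div_lt (norm_pos_iff.2 hx)
      exact ⟨n, Or.inr hn⟩

lemma nuPer_eq (ν : Measure V) [SigmaFinite ν] (E : Set V) (hE : MeasurableSet E)
    (hEvol : volume E < ⊤) :
    nuPer ν E = ∫⁻ y, (volume E - covFn E (-y)) ∂ν := by
  have hmeas : Measurable (Function.uncurry fun x y : V =>
      (Eᶜ.indicator (fun _ => (1 : ℝ≥0∞))) (x + y)) :=
    (measurable_const.indicator hE.compl).comp (measurable_fst.add measurable_snd)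
  calc nuPer ν E
      = ∫⁻ x in E, ∫⁻ y, (Eᶜ.indicator (fun _ => (1 : ℝ≥0∞))) (x + y) ∂ν := by
        refine lintegral_congr fun x => ?_
        have hms : MeasurableSet ((fun y : V => x + y) ⁻¹' Eᶜ) :=
          hE.compl.preimage (measurable_const_add x)
        rw [show {y : V | x + y ∈ Eᶜ} = (fun y : V => x + y) ⁻¹' Eᶜ from rfl,
          ← lintegral_indicator_one hms]
        refine lintegral_congr fun y => ?_
        by_cases hy : x + y ∈ E <;> simp [Set.indicator_apply, hy]
    _ = ∫⁻ y, ∫⁻ x in E, (Eᶜ.indicator (fun _ => (1 : ℝ≥0∞))) (x + y) ∂volume ∂ν :=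
        lintegral_lintegral_swap hmeas.aemeasurable
    _ = ∫⁻ y, (volume E - covFn E (-y)) ∂ν := by
        refine lintegral_congr fun y => ?_
        have hms : MeasurableSet ((fun x : V => x + y) ⁻¹' Eᶜ) :=
          hE.compl.preimage (measurable_add_const y)
        have h1 : ∫⁻ x in E, (Eᶜ.indicator (fun _ => (1 : ℝ≥0∞))) (x + y) ∂volume
            = volume (((fun x : V => x + y) ⁻¹' Eᶜ) ∩ E) := by
          rw [← Measure.restrict_apply hms, ← lintegral_indicator_one hms]
          refine lintegral_congr fun x => ?_
          by_cases hx : x + y ∈ E <;> simp [Set.indicator_apply, hx]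
        rw [h1]
        have h2 : ((fun x : V => x + y) ⁻¹' Eᶜ) ∩ E = E \ (E ∩ {x : V | x + y ∈ E}) := by
          ext x
          simp only [Set.mem_inter_iff, Set.mem_preimage, Set.mem_compl_iff, Set.mem_diff,
            Set.mem_setOf_eq]
          tauto
        have h3 : volume (E \ (E ∩ {x : V | x + y ∈ E}))
            = volume E - volume (E ∩ {x : V | x + y ∈ E}) :=
          measure_diff Set.inter_subset_left
            ((hE.inter (hE.preimage (measurable_add_const y))).nullMeasurableSet)
            ((measure_mono Set.inter_subset_left).trans_lt hEvol).ne
        rw [h2, h3, covFn_eq_add]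

end Aux

/-- Convergence of the scaled non-local perimeter towards the Lebesgue measure when
the normalized measures `λ_ε(dx) = C_ε⁻¹ min(1, R_ε|x|) ν_ε(dx)` concentrate at
infinity:  `C_ε⁻¹ Per_{ν_ε}(E) → |E|` for any Borel set `E` of finite Lebesgue measure
with Lipschitz covariance function. -/
theorem statement10 {d : ℕ} (hd : 1 ≤ d)
    (ν : ℝ → Measure (EuclideanSpace ℝ (Fin d)))
    (hν0 : ∀ ε > (0 : ℝ), ν ε {0} = 0)
    (hadm : ∀ ε > (0 : ℝ), (∫⁻ x, ENNReal.ofReal (min 1 ‖x‖) ∂(ν ε)) < ⊤)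
    (Rε : ℝ → ℝ≥0∞) (hRε : ∀ ε > (0 : ℝ), 1 ≤ Rε ε)
    (C : ℝ → ℝ≥0∞)
    (hC : ∀ ε, C ε = ∫⁻ x, min 1 (Rε ε * (‖x‖₊ : ℝ≥0∞)) ∂(ν ε))
    (hCpos : ∀ ε > (0 : ℝ), 0 < C ε) (hCfin : ∀ ε > (0 : ℝ), C ε < ⊤)
    (lam : ℝ → Measure (EuclideanSpace ℝ (Fin d)))
    (hlam : ∀ ε, lam ε =
      (C ε)⁻¹ • (ν ε).withDensity fun x => min 1 (Rε ε * (‖x‖₊ : ℝ≥0∞)))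
    (htail : ∀ R > (0 : ℝ),
      Tendsto (fun ε => lam ε {x | R < ‖x‖}) (𝓝[>] (0 : ℝ)) (𝓝 1))
    (E : Set (EuclideanSpace ℝ (Fin d)))
    (hE : MeasurableSet E) (hEvol : volume E < ⊤)
    (hLip : ∃ L : ℝ≥0, LipschitzWith L fun y => (covFn E y).toReal) :
    Tendsto (fun ε => (C ε)⁻¹ * nuPer (ν ε) E) (𝓝[>] (0 : ℝ))
      (𝓝 (volume E)) := by
  classical
  obtain ⟨L, hLipL⟩ := hLip
  set a : ℝ≥0∞ := volume E with ha
  set M : ℝ≥0∞ := max a (L : ℝ≥0∞) with hM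
  have hMfin : M ≠ ⊤ := by
    rw [hM]
    exact (max_lt hEvol ENNReal.coe_lt_top).ne
  -- notation for h
  set h : EuclideanSpace ℝ (Fin d) → ℝ≥0∞ := fun y => a - covFn E (-y) with hh
  have hcovfin : ∀ y, covFn E y ≠ ⊤ := fun y => ((covFn_le E y).trans_lt hEvol).ne
  have hha : ∀ y, h y ≤ a := fun y => tsub_le_self
  -- Lipschitz bound : h y ≤ L * ‖y‖₊
  have hhL : ∀ y, h y ≤ (L : ℝ≥0∞) * (‖y‖₊ : ℝ≥0∞) := by
    intro y
    have hdist := hLipL.dist_le_mul (-y) 0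
    rw [dist_zero_right, norm_neg] at hdist
    have h0 : (covFn E 0).toReal = a.toReal := by rw [covFn_zero]
    rw [Real.dist_eq, h0] at hdist
    have habs := abs_le.1 hdist
    have hle : a.toReal ≤ (L : ℝ) * ‖y‖ + (covFn E (-y)).toReal := by
      have := habs.1
      linarith
    rw [hh]
    rw [tsub_le_iff_right]
    calc a = ENNReal.ofReal a.toReal := by rw [ENNReal.ofReal_toReal hEvol.ne]
      _ ≤ ENNReal.ofReal ((L : ℝ) * ‖y‖ + (covFn E (-y)).toReal) :=
          ENNReal.ofReal_le_ofReal hle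
      _ ≤ ENNReal.ofReal ((L : ℝ) * ‖y‖) + ENNReal.ofReal (covFn E (-y)).toReal :=
          ENNReal.ofReal_add_le
      _ = (L : ℝ≥0∞) * (‖y‖₊ : ℝ≥0∞) + covFn E (-y) := by
          rw [ENNReal.ofReal_mul L.coe_nonneg, ENNReal.ofReal_coe_nnreal,
            ofReal_norm, enorm_eq_nnnorm, ENNReal.ofReal_toReal (hcovfin _)]
  have hh_min : ∀ y, h y ≤ M * min 1 (‖y‖₊ : ℝ≥0∞) := by
    intro y
    rcases le_total (1 : ℝ≥0∞) (‖y‖₊ : ℝ≥0∞) with hy | hy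
    · rw [min_eq_left hy, mul_one]
      exact (hha y).trans (le_max_left _ _)
    · rw [min_eq_right hy]
      exact (hhL y).trans (mul_le_mul_left (le_max_right _ _) _)
  -- main quantitative step
  have hmain : ∀ δ : ℝ≥0∞, 0 < δ → δ ≤ 1 →
      ∀ᶠ ε in 𝓝[>] (0 : ℝ),
        (C ε)⁻¹ * nuPer (ν ε) E ∈ Set.Icc (a - δ) (a + δ) := by
    intro δ hδ hδ1
    have hδtop : δ ≠ ⊤ := (hδ1.trans_lt ENNReal.one_lt_top).ne
    have hδ8 : (0 : ℝ≥0∞) < δ / 8 := ENNReal.div_pos hδ.ne' (by norm_num)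
    -- choose n with small tail
    obtain ⟨n, hn⟩ : ∃ n : ℕ, volume (E \ Metric.closedBall (0 : EuclideanSpace ℝ (Fin d)) n) < δ / 8 := by
      have := (tail_vanish E hE hEvol).eventually_lt_const hδ8
      exact this.exists
    set R : ℝ := 2 * n + 1 with hR
    have hRpos : (0 : ℝ) < R := by positivity
    have hR1 : (1 : ℝ) ≤ R := by
      rw [hR]; linarith [Nat.cast_nonneg (α := ℝ) n]
    -- covariance tail bound
    have hgtail : ∀ y : EuclideanSpace ℝ (Fin d), R < ‖y‖ → covFn E (-y) ≤ δ / 4 := by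
      intro y hy
      have h2n : 2 * (n : ℝ) < ‖(-y : EuclideanSpace ℝ (Fin d))‖ := by
        rw [norm_neg]; simp only [hR] at hy; linarith
      refine (covFn_tail E (by positivity) h2n).trans ?_
      calc 2 * volume (E \ Metric.closedBall (0 : EuclideanSpace ℝ (Fin d)) n)
          ≤ 2 * (δ / 8) := mul_le_mul_right hn.le 2
        _ = δ / 4 := by
            rw [div_eq_mul_inv, div_eq_mul_inv, show ((8:ℝ≥0∞))⁻¹ = 2⁻¹ * 4⁻¹ by
              rw [← ENNReal.mul_inv (Or.inl (by norm_num)) (Or.inl (by norm_num))]; norm_num]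
            calc 2 * (δ * (2⁻¹ * 4⁻¹)) = (2 * 2⁻¹) * (δ * 4⁻¹) := by ring
              _ = δ * 4⁻¹ := by
                  rw [ENNReal.mul_inv_cancel (by norm_num) (by norm_num), one_mul]
    -- choose σ
    set σ : ℝ≥0∞ := δ / (2 * (M + 1)) with hσ
    have hMne : (2 * (M + 1)) ≠ ⊤ := by
      refine ENNReal.mul_ne_top (by norm_num) (by simp [hMfin])
    have hσpos : 0 < σ := ENNReal.div_pos hδ.ne' hMne
    have hσ1 : σ ≤ 1 := by
      calc σ ≤ δ / 2 := ENNReal.div_le_div_left (by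
        calc (2 : ℝ≥0∞) = 2 * 1 := by ring
          _ ≤ 2 * (M + 1) := mul_le_mul_right (by simp) 2) δ
        _ ≤ 1 / 2 := ENNReal.div_le_div_right hδ1 2
        _ ≤ 1 := by norm_num
    have hMσ : M * σ ≤ δ / 2 := by
      calc M * σ = M * δ / (2 * (M + 1)) := by
            rw [hσ, div_eq_mul_inv, div_eq_mul_inv, mul_assoc]
        _ ≤ (M + 1) * δ / (2 * (M + 1)) := by
            exact ENNReal.div_le_div_right (mul_le_mul_left le_self_add δ) _
        _ = (M + 1) * δ / ((M + 1) * 2) := by rw [mul_comm 2 (M + 1)]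
        _ = δ / 2 := ENNReal.mul_div_mul_left _ _ (by simp) (by simp [hMfin])
    have haσ : a * σ ≤ δ / 2 :=
      (mul_le_mul_left (le_max_left _ _) σ).trans hMσ
    -- the eventual bound
    have hlt : 1 - σ < 1 := ENNReal.sub_lt_self one_ne_top one_ne_zero hσpos.ne'
    filter_upwards [self_mem_nhdsWithin,
      (htail R hRpos).eventually (eventually_gt_nhds hlt)] with ε hε hK
    have hε' : (0 : ℝ) < ε := hε
    haveI : SigmaFinite (ν ε) := sigmaFinite_of_adm (ν ε) (hν0 ε hε') (hadm ε hε')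
    set w : EuclideanSpace ℝ (Fin d) → ℝ≥0∞ :=
      fun y => min 1 (Rε ε * (‖y‖₊ : ℝ≥0∞)) with hw
    have hwmeas : Measurable w :=
      measurable_const.min (measurable_const.mul measurable_nnnorm.coe_nnreal_ennreal)
    have hwlt : ∀ y, w y < ⊤ := fun y => (min_le_left _ _).trans_lt ENNReal.one_lt_top
    have hwne : ∀ y : EuclideanSpace ℝ (Fin d), y ≠ 0 → w y ≠ 0 := by
      intro y hy
      have hnorm : (0 : ℝ≥0∞) < (‖y‖₊ : ℝ≥0∞) := by
        simp only [ENNReal.coe_pos]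
        simpa [pos_iff_ne_zero] using hy
      have : (0 : ℝ≥0∞) < Rε ε * (‖y‖₊ : ℝ≥0∞) :=
        ENNReal.mul_pos (one_pos.trans_le (hRε ε hε')).ne' hnorm.ne'
      exact (lt_min one_pos this).ne'
    set f : EuclideanSpace ℝ (Fin d) → ℝ≥0∞ := fun y => h y / w y with hf
    -- identity
    have hid : (C ε)⁻¹ * nuPer (ν ε) E = ∫⁻ y, f y ∂(lam ε) := by
      rw [hlam ε, lintegral_smul_measure, smul_eq_mul,
        lintegral_withDensity_eq_lintegral_mul_non_measurable (ν ε) hwmeas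
          (Filter.Eventually.of_forall hwlt) f]
      have hae : ∀ᵐ y ∂(ν ε), (w * f) y = h y := by
        rw [ae_iff]
        refine measure_mono_null (fun y hy => ?_) (hν0 ε hε')
        simp only [Set.mem_setOf_eq] at hy
        by_contra hy0
        exact hy (by
          simp only [Pi.mul_apply, hf]
          exact ENNReal.mul_div_cancel (hwne y hy0) (hwlt y).ne)
      rw [lintegral_congr_ae hae, ← nuPer_eq (ν ε) E hE hEvol]
    -- probability
    have hluniv : lam ε Set.univ = 1 := by
      rw [hlam ε, Measure.smul_apply, smul_eq_mul,
        withDensity_apply _ MeasurableSet.univ, Measure.restrict_univ, ← hC ε]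
      exact ENNReal.inv_mul_cancel (hCpos ε hε').ne' (hCfin ε hε').ne
    set K : Set (EuclideanSpace ℝ (Fin d)) := {y | R < ‖y‖} with hKdef
    have hKmeas : MeasurableSet K := measurableSet_lt measurable_const measurable_norm
    have hlK1 : lam ε K ≤ 1 := hluniv ▸ measure_mono (Set.subset_univ K)
    have hlKs : 1 - σ ≤ lam ε K := hK.le
    have hlKc : lam ε Kᶜ ≤ σ := by
      have : lam ε Kᶜ = 1 - lam ε K := by
        rw [measure_compl hKmeas (hlK1.trans_lt ENNReal.one_lt_top).ne, hluniv]
      rw [this]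
      calc 1 - lam ε K ≤ 1 - (1 - σ) := tsub_le_tsub_left hlKs 1
        _ = σ := ENNReal.sub_sub_cancel one_ne_top hσ1
    -- pointwise bounds
    have hwK : ∀ y ∈ K, w y = 1 := by
      intro y hy
      have hy1 : (1 : ℝ≥0∞) ≤ (‖y‖₊ : ℝ≥0∞) := by
        rw [show ((1 : ℝ≥0∞)) = ((1 : ℝ≥0) : ℝ≥0∞) from rfl, ENNReal.coe_le_coe,
          ← NNReal.coe_le_coe]
        simp only [coe_nnnorm, NNReal.coe_one]
        have : R < ‖y‖ := hy
        linarith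
      refine min_eq_left ?_
      calc (1 : ℝ≥0∞) = 1 * 1 := (one_mul 1).symm
        _ ≤ Rε ε * (‖y‖₊ : ℝ≥0∞) := mul_le_mul' (hRε ε hε') hy1
    have hfK : ∀ y ∈ K, f y = h y := by
      intro y hy; rw [hf]; simp only; rw [hwK y hy, div_one]
    have hfM : ∀ y, f y ≤ M := by
      intro y
      by_cases hy : y = 0
      · subst hy
        have : h 0 = 0 := by rw [hh]; simp only [neg_zero, covFn_zero]; exact tsub_self a
        simp [hf, this]
      · refine ENNReal.div_le_of_le_mul ?_
        refine (hh_min y).trans (mul_le_mul_right ?_ M)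
        exact min_le_min le_rfl (le_mul_of_one_le_left zero_le (hRε ε hε'))
    -- split
    rw [hid, ← lintegral_add_compl f hKmeas]
    constructor
    · -- lower bound
      rw [tsub_le_iff_right]
      have hlow : (a - δ / 4) * lam ε K ≤ ∫⁻ y in K, f y ∂(lam ε) := by
        rw [← setLIntegral_const K (a - δ / 4)]
        refine lintegral_mono_ae ?_
        refine ae_restrict_of_forall_mem hKmeas fun y hy => ?_
        rw [hfK y hy, hh]
        exact tsub_le_tsub_left (hgtail y hy) a
      have hs1 : a * (1 - lam ε K) ≤ δ / 2 := by
        refine le_trans (mul_le_mul_right ?_ a) haσ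
        calc 1 - lam ε K ≤ 1 - (1 - σ) := tsub_le_tsub_left hlKs 1
          _ = σ := ENNReal.sub_sub_cancel one_ne_top hσ1
      have hs2 : a * lam ε K ≤ (a - δ / 4) * lam ε K + δ / 4 := by
        calc a * lam ε K ≤ ((a - δ / 4) + δ / 4) * lam ε K :=
              mul_le_mul_left le_tsub_add _
          _ = (a - δ / 4) * lam ε K + (δ / 4) * lam ε K := add_mul _ _ _
          _ ≤ (a - δ / 4) * lam ε K + (δ / 4) * 1 :=
              add_le_add_right (mul_le_mul_right hlK1 _) _
          _ = (a - δ / 4) * lam ε K + δ / 4 := by rw [mul_one]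
      have hs3 : δ / 2 + δ / 4 ≤ δ := by
        calc δ / 2 + δ / 4 ≤ δ / 2 + δ / 2 :=
              add_le_add_right (ENNReal.div_le_div_left (by norm_num) δ) _
          _ = δ := ENNReal.add_halves δ
      calc a = a * (1 - lam ε K) + a * lam ε K := by
            rw [← mul_add, tsub_add_cancel_of_le hlK1, mul_one]
        _ ≤ δ / 2 + ((a - δ / 4) * lam ε K + δ / 4) := add_le_add hs1 hs2
        _ ≤ δ / 2 + (∫⁻ y in K, f y ∂(lam ε) + δ / 4) :=
            add_le_add_right (add_le_add_left hlow _) _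
        _ = ∫⁻ y in K, f y ∂(lam ε) + (δ / 2 + δ / 4) := by ring
        _ ≤ ∫⁻ y in K, f y ∂(lam ε) + δ := add_le_add_right hs3 _
        _ ≤ (∫⁻ y in K, f y ∂(lam ε) + ∫⁻ y in Kᶜ, f y ∂(lam ε)) + δ :=
            add_le_add_left le_self_add _
    · -- upper bound
      have hup1 : ∫⁻ y in K, f y ∂(lam ε) ≤ a :=
        calc ∫⁻ y in K, f y ∂(lam ε) ≤ ∫⁻ _ in K, a ∂(lam ε) :=
            setLIntegral_mono measurable_const fun y hy => (hfK y hy).le.trans (hha y)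
          _ = a * lam ε K := setLIntegral_const K a
          _ ≤ a := (mul_le_mul_right hlK1 a).trans (by rw [mul_one])
      have hup2 : ∫⁻ y in Kᶜ, f y ∂(lam ε) ≤ δ :=
        calc ∫⁻ y in Kᶜ, f y ∂(lam ε) ≤ ∫⁻ _ in Kᶜ, M ∂(lam ε) :=
            setLIntegral_mono measurable_const fun y _ => hfM y
          _ = M * lam ε Kᶜ := setLIntegral_const _ M
          _ ≤ M * σ := mul_le_mul_right hlKc M
          _ ≤ δ / 2 := hMσ
          _ ≤ δ := ENNReal.half_le_self
      exact add_le_add hup1 hup2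
  -- conclude
  rw [ENNReal.tendsto_nhds hEvol.ne]
  intro δ hδ
  have h1 : (0 : ℝ≥0∞) < min δ 1 := lt_min hδ one_pos
  filter_upwards [hmain (min δ 1) h1 (min_le_right _ _)] with ε hε
  refine ⟨le_trans (tsub_le_tsub_left (min_le_left δ 1) a) hε.1,
    hε.2.trans (add_le_add_right (min_le_left δ 1) a)⟩
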